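/- In the OPT setup, there exists a maximum matching of the sparsity pattern S_{X_{W*}} that touches no vertex of J: that is, there is a matching M' ⊆ S_{X_{W*}} with |M'| = ν(S_{X_{W*}}) such that no pair (i,k) ∈ M' has i ∈ J. -/
import Mathlib


open Matrix MeasureTheory

/-- `A` has sparsity pattern `S`: the nonzero entries of `A` are exactly those indexed by `S`. -/
def HasPattern {m n : ℕ} (S : Finset (Fin m × Fin n)) (A : Matrix (Fin m) (Fin n) ℝ) : Prop :=
  ∀ i j, A i j ≠ 0 ↔ (i, j) ∈ S

/-- Generic rank of the class of matrices with sparsity pattern `S`. -/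
noncomputable def sprank {m n : ℕ} (S : Finset (Fin m × Fin n)) : ℕ :=
  sSup {r : ℕ | ∃ A : Matrix (Fin m) (Fin n) ℝ, HasPattern S A ∧ A.rank = r}

/-- The sparsity pattern restricted to the rows in `T` (rows outside `T` become zero). -/
def patternOn {m n : ℕ} (S : Finset (Fin m × Fin n)) (T : Finset (Fin m)) :
    Finset (Fin m × Fin n) :=
  S.filter (fun p => p.1 ∈ T)

/-- A matching of a sparsity pattern: any two distinct pairs differ in both coordinates. -/
def IsMatching {m n : ℕ} (M : Finset (Fin m × Fin n)) : Prop :=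
  ∀ p ∈ M, ∀ q ∈ M, p ≠ q → p.1 ≠ q.1 ∧ p.2 ≠ q.2

/-- `nu S` : maximum cardinality of a matching contained in `S`. -/
noncomputable def nu {m n : ℕ} (S : Finset (Fin m × Fin n)) : ℕ :=
  sSup {k : ℕ | ∃ M ⊆ S, IsMatching M ∧ M.card = k}

/-- ℓ₀ "norm": number of nonzero entries of a vector. -/
noncomputable def l0 {m : ℕ} (y : Fin m → ℝ) : ℕ :=
  (Finset.univ.filter (fun i => y i ≠ 0)).card

/-- `cospark A` : minimum of `‖A x‖₀` over nonzero `x`. -/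
noncomputable def cospark {m n : ℕ} (A : Matrix (Fin m) (Fin n) ℝ) : ℕ :=
  sInf {k : ℕ | ∃ x : Fin n → ℝ, x ≠ 0 ∧ l0 (A.mulVec x) = k}

/-- Generic cospark of the class of matrices with sparsity pattern `S`. -/
noncomputable def spcospark {m n : ℕ} (S : Finset (Fin m × Fin n)) : ℕ :=
  sSup {k : ℕ | ∃ A : Matrix (Fin m) (Fin n) ℝ, HasPattern S A ∧ cospark A = k}

/-- The row-submatrix `A_T`, realized as `A` with the rows outside `T` zeroed out. -/
noncomputable def rowRestrict {m n : ℕ} (A : Matrix (Fin m) (Fin n) ℝ) (T : Finset (Fin m)) :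
    Matrix (Fin m) (Fin n) ℝ :=
  Matrix.of fun i j => if i ∈ T then A i j else 0

/-- `X_W` : the rows of the pattern `S` all of whose nonzero positions lie in the columns `W`. -/
def rowsIn {m n : ℕ} (S : Finset (Fin m × Fin n)) (W : Finset (Fin n)) : Finset (Fin m) :=
  Finset.univ.filter (fun i => ∀ j, (i, j) ∈ S → j ∈ W)

namespace Stmt12Aux

variable {m n : ℕ}

lemma mem_rows {A : Finset (Fin m × Fin n)} {i : Fin m} :
    i ∈ A.image Prod.fst ↔ ∃ c, (i, c) ∈ A := by
  simp only [Finset.mem_image]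
  constructor
  · rintro ⟨⟨a, b⟩, h, rfl⟩; exact ⟨b, h⟩
  · rintro ⟨c, h⟩; exact ⟨(i, c), h, rfl⟩

lemma mem_cols {A : Finset (Fin m × Fin n)} {c : Fin n} :
    c ∈ A.image Prod.snd ↔ ∃ i, (i, c) ∈ A := by
  simp only [Finset.mem_image]
  constructor
  · rintro ⟨⟨a, b⟩, h, rfl⟩; exact ⟨a, h⟩
  · rintro ⟨i, h⟩; exact ⟨(i, c), h, rfl⟩

lemma matching_row_unique {M : Finset (Fin m × Fin n)} (hM : IsMatching M)
    {i : Fin m} {c c' : Fin n} (h1 : (i, c) ∈ M) (h2 : (i, c') ∈ M) : c = c' := by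
  by_contra hne
  exact (hM _ h1 _ h2 (fun h => hne (congrArg Prod.snd h))).1 rfl

lemma matching_col_unique {M : Finset (Fin m × Fin n)} (hM : IsMatching M)
    {i i' : Fin m} {c : Fin n} (h1 : (i, c) ∈ M) (h2 : (i', c) ∈ M) : i = i' := by
  by_contra hne
  exact (hM _ h1 _ h2 (fun h => hne (congrArg Prod.fst h))).2 rfl

lemma card_le_nu {S' N : Finset (Fin m × Fin n)} (hsub : N ⊆ S') (hm : IsMatching N) :
    N.card ≤ nu S' := by
  apply le_csSup
  · refine ⟨S'.card, ?_⟩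
    rintro k ⟨M, hM, _, rfl⟩
    exact Finset.card_le_card hM
  · exact ⟨N, hsub, hm, rfl⟩

lemma exists_max_matching (S' : Finset (Fin m × Fin n)) :
    ∃ N ⊆ S', IsMatching N ∧ N.card = nu S' := by
  have hmem : nu S' ∈ {k : ℕ | ∃ M ⊆ S', IsMatching M ∧ M.card = k} := by
    apply Nat.sSup_mem
    · exact ⟨0, ∅, Finset.empty_subset _, fun p hp => absurd hp (Finset.notMem_empty p), rfl⟩
    · refine ⟨S'.card, ?_⟩
      rintro k ⟨M, hM, _, rfl⟩
      exact Finset.card_le_card hM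
  obtain ⟨N, h1, h2, h3⟩ := hmem
  exact ⟨N, h1, h2, h3⟩

lemma mem_rowsIn {S : Finset (Fin m × Fin n)} {W : Finset (Fin n)} {i : Fin m} :
    i ∈ rowsIn S W ↔ ∀ j, (i, j) ∈ S → j ∈ W := by
  simp [rowsIn]

variable {S : Finset (Fin m × Fin n)} {OPT : Finset (Fin m)}
  {M : Finset (Fin m × Fin n)} {J : Finset (Fin m)} {W : Finset (Fin n)} {v : Fin n}

/-- Inner lemma: walking an alternating path from a `J`-row matched by `M''`. -/
lemma inner
    (hn : 1 ≤ n)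
    (hMsub : M ⊆ patternOn S OPT)
    (hMm : IsMatching M)
    (hMW : M.image Prod.snd = W)
    (hMcard : M.card = n - 1)
    (hv : v ∉ W)
    (hvonly : ∀ c : Fin n, c ∉ W → c = v)
    (hJOPT : J ⊆ OPT)
    (hJrow : ∀ j ∈ J, ∀ c, (j, c) ∉ M)
    (hbound : ∀ N ⊆ patternOn S OPT, IsMatching N → N.card ≤ n - 1)
    (M'' : Finset (Fin m × Fin n))
    (hM''sub : M'' ⊆ patternOn S (rowsIn S W))
    (hM''m : IsMatching M'')
    {j : Fin m} (hjJ : j ∈ J) :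
    ∀ (d : ℕ) (U'' UM : Finset (Fin m × Fin n)) (c : Fin n),
      M.card - UM.card ≤ d →
      U'' ⊆ M'' → UM ⊆ M → c ∈ W →
      U''.image Prod.snd = insert c (UM.image Prod.snd) →
      c ∉ UM.image Prod.snd →
      U''.image Prod.fst = insert j (UM.image Prod.fst) →
      j ∉ UM.image Prod.fst →
      U''.card = UM.card + 1 →
      ∃ M''' ⊆ patternOn S (rowsIn S W), IsMatching M''' ∧ M'''.card = M''.card ∧
        ∀ p ∈ M''', p.1 ∈ J → p ∈ M'' ∧ p.1 ≠ j := by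
  have hM''mem : ∀ p ∈ M'', p ∈ S ∧ p.1 ∈ rowsIn S W :=
    fun p hp => Finset.mem_filter.mp (hM''sub hp)
  have hM''col : ∀ p ∈ M'', p.2 ∈ W := by
    intro p hp
    have h := hM''mem p hp
    exact (mem_rowsIn.mp h.2) p.2 h.1
  have hMOPT : ∀ p ∈ M, p ∈ S ∧ p.1 ∈ OPT :=
    fun p hp => Finset.mem_filter.mp (hMsub hp)
  intro d
  induction d with
  | zero =>
    intro U'' UM c hd hU'' hUM hcW hcols hcUM hrows hjUM hcard
    exfalso
    have hle : M.card ≤ UM.card := by omega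
    have : UM = M := Finset.eq_of_subset_of_card_le hUM hle
    rw [this, hMW] at hcUM
    exact hcUM hcW
  | succ d ih =>
    intro U'' UM c hd hU'' hUM hcW hcols hcUM hrows hjUM hcard
    obtain ⟨i, hic⟩ : ∃ i, (i, c) ∈ M := by
      rw [← hMW] at hcW; exact mem_cols.mp hcW
    have hij : i ≠ j := fun h => hJrow j hjJ c (h ▸ hic)
    have hiUM : i ∉ UM.image Prod.fst := by
      intro h
      obtain ⟨c', hc'⟩ := mem_rows.mp h
      have hcc : c' = c := matching_row_unique hMm (hUM hc') hic
      exact hcUM (mem_cols.mpr ⟨i, hcc ▸ hc'⟩)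
    have hiU'' : i ∉ U''.image Prod.fst := by
      rw [hrows, Finset.mem_insert]
      rintro (h | h)
      · exact hij h
      · exact hiUM h
    have hnotinUM : (i, c) ∉ UM := fun h => hiUM (mem_rows.mpr ⟨c, h⟩)
    have hrowU''M'' : ∀ r ∈ U''.image Prod.fst, ∀ c', (r, c') ∈ M'' → (r, c') ∈ U'' := by
      intro r hr c' hrc'
      obtain ⟨c'', hc''⟩ := mem_rows.mp hr
      have h : c'' = c' := matching_row_unique hM''m (hU'' hc'') hrc'
      exact h ▸ hc''
    have hcolU''M'' : ∀ c' ∈ U''.image Prod.snd, ∀ r, (r, c') ∈ M'' → (r, c') ∈ U'' := by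
      intro c' hc' r hrc'
      obtain ⟨r', hr'⟩ := mem_cols.mp hc'
      have h : r' = r := matching_col_unique hM''m (hU'' hr') hrc'
      exact h ▸ hr'
    have hrowsU'' : ∀ q1 q2, (q1, q2) ∈ U'' → q1 = j ∨ ∃ c4, (q1, c4) ∈ UM := by
      intro q1 q2 hq
      have h : q1 ∈ U''.image Prod.fst := mem_rows.mpr ⟨q2, hq⟩
      rw [hrows, Finset.mem_insert] at h
      rcases h with h | h
      · exact Or.inl h
      · exact Or.inr (mem_rows.mp h)
    by_cases hmatched : ∃ c2, (i, c2) ∈ M''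
    · -- continue the walk
      obtain ⟨c2, hic2⟩ := hmatched
      have hc2W : c2 ∈ W := hM''col _ hic2
      have hc2 : c2 ∉ U''.image Prod.snd := by
        intro h
        exact hiU'' (mem_rows.mpr ⟨c2, hcolU''M'' c2 h i hic2⟩)
      have hnotinU : (i, c2) ∉ U'' := fun h => hiU'' (mem_rows.mpr ⟨c2, h⟩)
      apply ih (insert (i, c2) U'') (insert (i, c) UM) c2
      · rw [Finset.card_insert_of_notMem hnotinUM]; omega
      · exact Finset.insert_subset hic2 hU''
      · exact Finset.insert_subset hic hUM
      · exact hc2W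
      · rw [Finset.image_insert, Finset.image_insert, hcols]
      · rw [Finset.image_insert, ← hcols]; exact hc2
      · rw [Finset.image_insert, Finset.image_insert, hrows, Finset.insert_comm]
      · rw [Finset.image_insert, Finset.mem_insert]
        rintro (h | h)
        · exact hij h.symm
        · exact hjUM h
      · rw [Finset.card_insert_of_notMem hnotinU, Finset.card_insert_of_notMem hnotinUM, hcard]
    · push_neg at hmatched
      by_cases hiX : i ∈ rowsIn S W
      · -- swap along the path
        have hUM'sub : insert (i, c) UM ⊆ M := Finset.insert_subset hic hUM
        have key : ∀ p1 p2, (p1, p2) ∈ M'' \ U'' → ∀ q1 q2, (q1, q2) ∈ insert (i, c) UM →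
            p1 ≠ q1 ∧ p2 ≠ q2 := by
          intro p1 p2 hp q1 q2 hq
          obtain ⟨hpM'', hpU''⟩ := Finset.mem_sdiff.mp hp
          constructor
          · intro h
            subst h
            rw [Finset.mem_insert] at hq
            rcases hq with heq | hq
            · injection heq with h1 h2
              subst h1
              exact hmatched p2 hpM''
            · have hj1 : p1 ∈ U''.image Prod.fst := by
                rw [hrows, Finset.mem_insert]
                exact Or.inr (mem_rows.mpr ⟨q2, hq⟩)
              exact hpU'' (hrowU''M'' p1 hj1 p2 hpM'')
          · intro h
            subst h
            have hq2 : p2 ∈ U''.image Prod.snd := by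
              rw [hcols, Finset.mem_insert]
              rw [Finset.mem_insert] at hq
              rcases hq with heq | hq
              · injection heq with h1 h2
                exact Or.inl h2
              · exact Or.inr (mem_cols.mpr ⟨q1, hq⟩)
            exact hpU'' (hcolU''M'' p2 hq2 p1 hpM'')
        refine ⟨(M'' \ U'') ∪ insert (i, c) UM, ?_, ?_, ?_, ?_⟩
        · apply Finset.union_subset
          · exact Finset.Subset.trans Finset.sdiff_subset hM''sub
          · intro p hp
            rw [Finset.mem_insert] at hp
            rcases hp with rfl | hp
            · exact Finset.mem_filter.mpr ⟨(hMOPT _ hic).1, hiX⟩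
            · refine Finset.mem_filter.mpr ⟨(hMOPT _ (hUM hp)).1, ?_⟩
              have hp1 : p.1 ∈ U''.image Prod.fst := by
                rw [hrows, Finset.mem_insert]
                exact Or.inr (mem_rows.mpr ⟨p.2, hp⟩)
              obtain ⟨c'', hc''⟩ := mem_rows.mp hp1
              exact (hM''mem _ (hU'' hc'')).2
        · intro p hp q hq hne
          rcases Finset.mem_union.mp hp with hp1 | hp2 <;>
            rcases Finset.mem_union.mp hq with hq1 | hq2
          · exact hM''m p (Finset.mem_sdiff.mp hp1).1 q (Finset.mem_sdiff.mp hq1).1 hne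
          · exact key p.1 p.2 hp1 q.1 q.2 hq2
          · exact (key q.1 q.2 hq1 p.1 p.2 hp2).imp Ne.symm Ne.symm
          · exact hMm p (hUM'sub hp2) q (hUM'sub hq2) hne
        · have hdisj : Disjoint (M'' \ U'') (insert (i, c) UM) := by
            rw [Finset.disjoint_left]
            intro p hp hq
            exact (key p.1 p.2 hp p.1 p.2 hq).1 rfl
          rw [Finset.card_union_of_disjoint hdisj, Finset.card_sdiff_of_subset hU'',
            Finset.card_insert_of_notMem hnotinUM]
          have hle2 := Finset.card_le_card hU''
          omega
        · intro p hp hpJ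
          rcases Finset.mem_union.mp hp with hp1 | hp2
          · obtain ⟨hpM'', hpU''⟩ := Finset.mem_sdiff.mp hp1
            refine ⟨hpM'', ?_⟩
            intro h
            apply hpU''
            have hj1 : p.1 ∈ U''.image Prod.fst := by
              rw [hrows, Finset.mem_insert]; exact Or.inl h
            exact hrowU''M'' p.1 hj1 p.2 hpM''
          · exact absurd (hUM'sub hp2) (hJrow p.1 hpJ p.2)
      · -- augmenting path: contradiction with maximality
        exfalso
        obtain ⟨c', hc'S, hc'W⟩ : ∃ c', (i, c') ∈ S ∧ c' ∉ W := by
          by_contra hcon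
          push_neg at hcon
          exact hiX (mem_rowsIn.mpr hcon)
        have hc'v : c' = v := hvonly c' hc'W
        rw [hc'v] at hc'S
        have hUM'sub : insert (i, c) UM ⊆ M := Finset.insert_subset hic hUM
        have key2 : ∀ p1 p2, (p1, p2) ∈ M \ insert (i, c) UM → ∀ q1 q2, (q1, q2) ∈ U'' →
            p1 ≠ q1 ∧ p2 ≠ q2 := by
          intro p1 p2 hp q1 q2 hq
          obtain ⟨hpM, hpUM'⟩ := Finset.mem_sdiff.mp hp
          constructor
          · intro h
            subst h
            rcases hrowsU'' p1 q2 hq with h1 | ⟨c4, hc4⟩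
            · subst h1
              exact hJrow p1 hjJ p2 hpM
            · have h2 : p2 = c4 := matching_row_unique hMm hpM (hUM hc4)
              subst h2
              exact hpUM' (Finset.mem_insert_of_mem hc4)
          · intro h
            subst h
            have hq2 : p2 ∈ U''.image Prod.snd := mem_cols.mpr ⟨q1, hq⟩
            rw [hcols, Finset.mem_insert] at hq2
            rcases hq2 with h1 | h1
            · subst h1
              have h2 : p1 = i := matching_col_unique hMm hpM hic
              subst h2
              exact hpUM' (Finset.mem_insert_self _ _)
            · obtain ⟨r4, hr4⟩ := mem_cols.mp h1
              have h2 : r4 = p1 := matching_col_unique hMm (hUM hr4) hpM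
              subst h2
              exact hpUM' (Finset.mem_insert_of_mem hr4)
        have key3 : ∀ q1 q2, (q1, q2) ∈ (M \ insert (i, c) UM) ∪ U'' → i ≠ q1 ∧ v ≠ q2 := by
          intro q1 q2 hq
          rcases Finset.mem_union.mp hq with hq1 | hq2
          · obtain ⟨hqM, hqUM'⟩ := Finset.mem_sdiff.mp hq1
            constructor
            · intro h
              subst h
              have h2 : q2 = c := matching_row_unique hMm hqM hic
              subst h2
              exact hqUM' (Finset.mem_insert_self _ _)
            · intro h
              subst h
              have hvM : v ∈ M.image Prod.snd := mem_cols.mpr ⟨q1, hqM⟩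
              rw [hMW] at hvM
              exact hv hvM
          · constructor
            · intro h
              subst h
              exact hiU'' (mem_rows.mpr ⟨q2, hq2⟩)
            · intro h
              subst h
              exact hv (hM''col _ (hU'' hq2))
        have hivU : (i, v) ∉ (M \ insert (i, c) UM) ∪ U'' := fun h => (key3 i v h).1 rfl
        set N : Finset (Fin m × Fin n) := insert (i, v) ((M \ insert (i, c) UM) ∪ U'') with hNdef
        have hNsub : N ⊆ patternOn S OPT := by
          rw [hNdef]
          apply Finset.insert_subset
          · exact Finset.mem_filter.mpr ⟨hc'S, (hMOPT _ hic).2⟩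
          apply Finset.union_subset
          · exact Finset.Subset.trans Finset.sdiff_subset hMsub
          · intro q hq
            refine Finset.mem_filter.mpr ⟨(hM''mem _ (hU'' hq)).1, ?_⟩
            rcases hrowsU'' q.1 q.2 hq with h | ⟨c4, hc4⟩
            · rw [h]; exact hJOPT hjJ
            · exact (hMOPT _ (hUM hc4)).2
        have hNm : IsMatching N := by
          intro p hp q hq hne
          rw [hNdef, Finset.mem_insert] at hp hq
          rcases hp with rfl | hp <;> rcases hq with rfl | hq
          · exact absurd rfl hne
          · exact ((key3 q.1 q.2 hq).imp id id)
          · exact (key3 p.1 p.2 hp).imp Ne.symm Ne.symm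
          · rcases Finset.mem_union.mp hp with hp1 | hp2 <;>
              rcases Finset.mem_union.mp hq with hq1 | hq2
            · exact hMm p (Finset.mem_sdiff.mp hp1).1 q (Finset.mem_sdiff.mp hq1).1 hne
            · exact key2 p.1 p.2 hp1 q.1 q.2 hq2
            · exact (key2 q.1 q.2 hq1 p.1 p.2 hp2).imp Ne.symm Ne.symm
            · exact hM''m p (hU'' hp2) q (hU'' hq2) hne
        have hdisj2 : Disjoint (M \ insert (i, c) UM) U'' := by
          rw [Finset.disjoint_left]
          intro p hp hq
          exact (key2 p.1 p.2 hp p.1 p.2 hq).1 rfl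
        have hNcard : N.card = n := by
          rw [hNdef, Finset.card_insert_of_notMem hivU,
            Finset.card_union_of_disjoint hdisj2, Finset.card_sdiff_of_subset hUM'sub,
            Finset.card_insert_of_notMem hnotinUM]
          have hle3 := Finset.card_le_card hUM'sub
          rw [Finset.card_insert_of_notMem hnotinUM] at hle3
          omega
        have hcon := hbound N hNsub hNm
        omega

/-- Outer lemma: remove `J`-rows from a matching one at a time. -/
lemma outer
    (hn : 1 ≤ n)
    (hMsub : M ⊆ patternOn S OPT)
    (hMm : IsMatching M)
    (hMW : M.image Prod.snd = W)
    (hMcard : M.card = n - 1)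
    (hv : v ∉ W)
    (hvonly : ∀ c : Fin n, c ∉ W → c = v)
    (hJOPT : J ⊆ OPT)
    (hJrow : ∀ j ∈ J, ∀ c, (j, c) ∉ M)
    (hbound : ∀ N ⊆ patternOn S OPT, IsMatching N → N.card ≤ n - 1) :
    ∀ (k : ℕ) (M'' : Finset (Fin m × Fin n)),
      M'' ⊆ patternOn S (rowsIn S W) → IsMatching M'' →
      (M''.filter (fun p => p.1 ∈ J)).card ≤ k →
      ∃ M''' ⊆ patternOn S (rowsIn S W), IsMatching M''' ∧ M'''.card = M''.card ∧
        ∀ p ∈ M''', p.1 ∉ J := by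
  intro k
  induction k with
  | zero =>
    intro M'' hsub hm hcard
    refine ⟨M'', hsub, hm, rfl, ?_⟩
    intro p hp hpJ
    have hmem : p ∈ M''.filter (fun p => p.1 ∈ J) := Finset.mem_filter.mpr ⟨hp, hpJ⟩
    rw [Finset.card_eq_zero.mp (Nat.le_zero.mp hcard)] at hmem
    exact Finset.notMem_empty p hmem
  | succ k ih =>
    intro M'' hsub hm hcard
    by_cases hJex : ∃ p ∈ M'', p.1 ∈ J
    · obtain ⟨⟨j, c1⟩, hpM, hjJ⟩ := hJex
      have hc1W : c1 ∈ W := by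
        have h := Finset.mem_filter.mp (hsub hpM)
        exact (mem_rowsIn.mp h.2) c1 h.1
      obtain ⟨M''', hsub3, hm3, hcard3, hP⟩ :=
        inner hn hMsub hMm hMW hMcard hv hvonly hJOPT hJrow hbound M'' hsub hm hjJ
          M.card {(j, c1)} ∅ c1 (by simp) (Finset.singleton_subset_iff.mpr hpM)
          (Finset.empty_subset _) hc1W (by simp) (by simp) (by simp) (by simp) (by simp)
      have hlt : (M'''.filter (fun p => p.1 ∈ J)).card <
          (M''.filter (fun p => p.1 ∈ J)).card := by
        apply Finset.card_lt_card
        constructor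
        · intro p hp
          obtain ⟨hp1, hp2⟩ := Finset.mem_filter.mp hp
          exact Finset.mem_filter.mpr ⟨(hP p hp1 hp2).1, hp2⟩
        · intro hcon
          have h1 : (j, c1) ∈ M''.filter (fun p => p.1 ∈ J) :=
            Finset.mem_filter.mpr ⟨hpM, hjJ⟩
          have h2 := hcon h1
          obtain ⟨h3, h4⟩ := Finset.mem_filter.mp h2
          exact (hP _ h3 h4).2 rfl
      obtain ⟨M4, hs4, hm4, hc4, hJ4⟩ := ih M''' hsub3 hm3 (by omega)
      exact ⟨M4, hs4, hm4, by rw [hc4, hcard3], hJ4⟩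
    · push_neg at hJex
      exact ⟨M'', hsub, hm, rfl, hJex⟩

end Stmt12Aux

/-- in the OPT setup, there exists a maximum matching of the pattern
`S_{X_{W*}}` touching no row of `J`. -/
theorem stmt12 {m n : ℕ} (hn : 1 ≤ n) (hmn : n < m) (S : Finset (Fin m × Fin n))
    (hspr : sprank S = n)
    (OPT : Finset (Fin m)) (hOPT : nu (patternOn S OPT) = n - 1)
    (hmax : ∀ T : Finset (Fin m), nu (patternOn S T) = n - 1 → T.card ≤ OPT.card)
    (M : Finset (Fin m × Fin n)) (hMsub : M ⊆ patternOn S OPT)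
    (hM : IsMatching M) (hMcard : M.card = n - 1)
    (I : Finset (Fin m)) (hI : I = M.image Prod.fst)
    (J : Finset (Fin m)) (hJ : J = OPT \ I) (hJne : J.Nonempty)
    (W : Finset (Fin n)) (hW : W = M.image Prod.snd)
    (v : Fin n) (hv : v ∉ W)
    :
    ∃ M' ⊆ patternOn S (rowsIn S W), IsMatching M' ∧
      M'.card = nu (patternOn S (rowsIn S W)) ∧ ∀ p ∈ M', p.1 ∉ J := by
  have hMW : M.image Prod.snd = W := hW.symm
  have hWcard : W.card = n - 1 := by
    rw [hW, Finset.card_image_of_injOn, hMcard]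
    intro p hp q hq hpq
    by_contra hne
    exact (hM p hp q hq hne).2 hpq
  have hvonly : ∀ c : Fin n, c ∉ W → c = v := by
    intro c hc
    have hcompl : Wᶜ.card = 1 := by
      rw [Finset.card_compl, hWcard]
      simp only [Fintype.card_fin]
      omega
    exact Finset.card_le_one.mp (le_of_eq hcompl) c (Finset.mem_compl.mpr hc) v
      (Finset.mem_compl.mpr hv)
  have hJOPT : J ⊆ OPT := by rw [hJ]; exact Finset.sdiff_subset
  have hJrow : ∀ j ∈ J, ∀ c, (j, c) ∉ M := by
    intro j hj c hjc
    rw [hJ, Finset.mem_sdiff] at hj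
    exact hj.2 (by rw [hI]; exact Stmt12Aux.mem_rows.mpr ⟨c, hjc⟩)
  have hbound : ∀ N ⊆ patternOn S OPT, IsMatching N → N.card ≤ n - 1 := by
    intro N hNs hNm
    rw [← hOPT]
    exact Stmt12Aux.card_le_nu hNs hNm
  obtain ⟨M'', hsub, hm, hcard⟩ := Stmt12Aux.exists_max_matching (patternOn S (rowsIn S W))
  obtain ⟨M''', hs3, hm3, hc3, hJ3⟩ :=
    Stmt12Aux.outer hn hMsub hM hMW hMcard hv hvonly hJOPT hJrow hbound
      (M''.filter (fun p => p.1 ∈ J)).card M'' hsub hm le_rfl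
  exact ⟨M''', hs3, hm3, by rw [hc3, hcard], hJ3⟩
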